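/- Two pairs of vectors (v₁, v₂) and (w₁, w₂) in ℤ², each pair consisting of primitive vectors, with det(v₁,v₂) = det(w₁,w₂) = N > 0 and v₁ ≡ α v₂ mod N, w₁ ≡ α w₂ mod N for the same unit α ∈ (ℤ/N)^×, lie in the same SL₂(ℤ)-orbit (acting simultaneously on both vectors of the pair). -/

import Mathlib

/-- Two pairs of primitive vectors in `ℤ²` with the same determinant `N > 0` and the
same congruence invariant `α ∈ (ℤ/N)ˣ` (i.e. `v₁ ≡ α·v₂` and `w₁ ≡ α·w₂ mod N`)
lie in the same `SL₂(ℤ)`-orbit for the diagonal action on pairs. -/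
theorem sl2_orbit_of_invariants (v₁ v₂ w₁ w₂ : Fin 2 → ℤ) (N : ℤ) (hN : 0 < N)
    (hv₁ : IsCoprime (v₁ 0) (v₁ 1)) (hv₂ : IsCoprime (v₂ 0) (v₂ 1))
    (hw₁ : IsCoprime (w₁ 0) (w₁ 1)) (hw₂ : IsCoprime (w₂ 0) (w₂ 1))
    (hdv : v₁ 0 * v₂ 1 - v₁ 1 * v₂ 0 = N)
    (hdw : w₁ 0 * w₂ 1 - w₁ 1 * w₂ 0 = N)
    (α : ℤ) (hα : IsCoprime α N)
    (hv : ∀ i, N ∣ (v₁ i - α * v₂ i))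
    (hw : ∀ i, N ∣ (w₁ i - α * w₂ i)) :
    ∃ g : Matrix.SpecialLinearGroup (Fin 2) ℤ,
      (g : Matrix (Fin 2) (Fin 2) ℤ).mulVec v₁ = w₁ ∧
      (g : Matrix (Fin 2) (Fin 2) ℤ).mulVec v₂ = w₂ := by
  have hN0 : N ≠ 0 := hN.ne'
  -- the four entries of W ⬝ adj(V) are divisible by N
  have hA : N ∣ w₁ 0 * v₂ 1 - w₂ 0 * v₁ 1 := by
    have := dvd_sub ((hw 0).mul_right (v₂ 1)) ((hv 1).mul_left (w₂ 0))
    convert this using 1; rfl; ring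
  have hB : N ∣ w₂ 0 * v₁ 0 - w₁ 0 * v₂ 0 := by
    have := dvd_sub ((hv 0).mul_left (w₂ 0)) ((hw 0).mul_right (v₂ 0))
    convert this using 1; rfl; ring
  have hC : N ∣ w₁ 1 * v₂ 1 - w₂ 1 * v₁ 1 := by
    have := dvd_sub ((hw 1).mul_right (v₂ 1)) ((hv 1).mul_left (w₂ 1))
    convert this using 1; rfl; ring
  have hD : N ∣ w₂ 1 * v₁ 0 - w₁ 1 * v₂ 0 := by
    have := dvd_sub ((hv 0).mul_left (w₂ 1)) ((hw 1).mul_right (v₂ 0))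
    convert this using 1; rfl; ring
  obtain ⟨a, ha⟩ := hA
  obtain ⟨b, hb⟩ := hB
  obtain ⟨c, hc⟩ := hC
  obtain ⟨d, hd⟩ := hD
  have hdet : a * d - b * c = 1 := by
    have key : N * N * (a * d - b * c) = N * N * 1 := by
      linear_combination (-(N * d)) * ha + (N * c) * hb + (w₂ 0 * v₁ 1 - w₁ 0 * v₂ 1) * hd
        + (w₂ 0 * v₁ 0 - w₁ 0 * v₂ 0) * hc
        + (v₁ 0 * v₂ 1 - v₁ 1 * v₂ 0) * hdw + N * hdv
    exact mul_left_cancel₀ (mul_ne_zero hN0 hN0) key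
  refine ⟨⟨!![a, b; c, d], by simpa [Matrix.det_fin_two_of] using hdet⟩, ?_, ?_⟩
  · funext i
    fin_cases i <;> simp [Matrix.mulVec, dotProduct, Fin.sum_univ_two] <;>
      apply mul_left_cancel₀ hN0
    · linear_combination (-(v₁ 0)) * ha - (v₁ 1) * hb + (w₁ 0) * hdv
    · linear_combination (-(v₁ 0)) * hc - (v₁ 1) * hd + (w₁ 1) * hdv
  · funext i
    fin_cases i <;> simp [Matrix.mulVec, dotProduct, Fin.sum_univ_two] <;>
      apply mul_left_cancel₀ hN0
    · linear_combination (-(v₂ 0)) * ha - (v₂ 1) * hb + (w₂ 0) * hdv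
    · linear_combination (-(v₂ 0)) * hc - (v₂ 1) * hd + (w₂ 1) * hdv
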